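/- Let G be a finite group and ρ : G →* GL(V) a faithful representation on a finite-dimensional complex vector space V. Then the diagonal representation of G on V × V, where g acts by (v, w) ↦ (ρ(g) v, ρ(g) w), is faithful and contains no pseudoreflections: for every g ∈ G with g ≠ 1, the subspace of vectors of V × V fixed by the diagonal action of g has complex codimension at least 2. -/

import Mathlib

/-- The submodule `p.prod q` is linearly equivalent to `p × q`. -/
def prodSubEquivAux {R M N : Type*} [Ring R] [AddCommGroup M] [AddCommGroup N]
    [Module R M] [Module R N] (p : Submodule R M) (q : Submodule R N) :
    (p.prod q : Submodule R (M × N)) ≃ₗ[R] p × q where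
  toFun x := (⟨x.1.1, x.2.1⟩, ⟨x.1.2, x.2.2⟩)
  invFun y := ⟨(y.1.1, y.2.1), ⟨y.1.2, y.2.2⟩⟩
  map_add' _ _ := rfl
  map_smul' _ _ := rfl
  left_inv _ := rfl
  right_inv _ := rfl

theorem finrank_prod_sub {R M N : Type*} [DivisionRing R] [AddCommGroup M] [AddCommGroup N]
    [Module R M] [Module R N] [FiniteDimensional R M] [FiniteDimensional R N]
    (p : Submodule R M) (q : Submodule R N) :
    Module.finrank R (p.prod q : Submodule R (M × N)) =
      Module.finrank R p + Module.finrank R q := by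
  rw [LinearEquiv.finrank_eq (prodSubEquivAux p q), Module.finrank_prod]

/-- If `ρ : G →* GL(V)` is a faithful representation of a finite group `G` on a
finite-dimensional complex vector space `V`, then the diagonal representation of `G`
on `V × V` (where `g` acts by `(v, w) ↦ (ρ g v, ρ g w)`) is faithful and contains no
pseudoreflections: for `g ≠ 1`, the fixed subspace of the diagonal action of `g` has
complex codimension at least `2` in `V × V`. -/
theorem doubled_rep_has_no_pseudoreflections
    (G : Type) [Group G] [Finite G]
    (V : Type) [AddCommGroup V] [Module ℂ V] [FiniteDimensional ℂ V]
    (ρ : G →* (V ≃ₗ[ℂ] V)) (hρ : Function.Injective ρ) :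
    Function.Injective
      (fun g : G => LinearMap.prodMap (ρ g : V →ₗ[ℂ] V) (ρ g : V →ₗ[ℂ] V)) ∧
    ∀ g : G, g ≠ 1 →
      2 ≤ Module.finrank ℂ
        ((V × V) ⧸ LinearMap.ker
          (LinearMap.prodMap (ρ g : V →ₗ[ℂ] V) (ρ g : V →ₗ[ℂ] V) - LinearMap.id)) := by
  constructor
  · intro g g' h
    apply hρ
    ext v
    have := congrArg (fun m : (V × V) →ₗ[ℂ] (V × V) => (m (v, 0)).1) h
    simpa using this
  · intro g hg
    have hrw : LinearMap.prodMap (ρ g : V →ₗ[ℂ] V) (ρ g : V →ₗ[ℂ] V) - LinearMap.id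
        = LinearMap.prodMap ((ρ g : V →ₗ[ℂ] V) - LinearMap.id)
            ((ρ g : V →ₗ[ℂ] V) - LinearMap.id) := by
      ext v <;> simp
    set h : V →ₗ[ℂ] V := (ρ g : V →ₗ[ℂ] V) - LinearMap.id with hh
    set K := LinearMap.ker h with hK
    have hkerK : Module.finrank ℂ K < Module.finrank ℂ V := by
      apply Submodule.finrank_lt
      intro htop
      apply hg
      apply hρ
      ext v
      have hv : v ∈ K := htop ▸ Submodule.mem_top
      have : h v = 0 := hv
      have : (ρ g : V →ₗ[ℂ] V) v - v = 0 := by simpa [hh] using this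
      simpa [sub_eq_zero] using this
    rw [hrw]
    have hker : LinearMap.ker (LinearMap.prodMap h h) = K.prod K := LinearMap.ker_prodMap h h
    rw [hker]
    have h1 := Submodule.finrank_quotient_add_finrank (K.prod K : Submodule ℂ (V × V))
    rw [finrank_prod_sub K K] at h1
    have h2 : Module.finrank ℂ (V × V) = Module.finrank ℂ V + Module.finrank ℂ V :=
      Module.finrank_prod
    omega
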